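/- For a needle of length L thrown uniformly at random on a plane ruled with parallel lines spaced δ apart, with L < δ, the probability that the needle crosses a line equals 2L/(πδ). -/

import Mathlib

open Real MeasureTheory intervalIntegral

lemma buffon_inner (δ c : ℝ) (hδ : 0 < δ) (hc : 0 ≤ c) (hcδ : c ≤ δ) :
    ∫ u in (0:ℝ)..(δ / 2), (if 2 * min u (δ - u) ≤ c then (1:ℝ) else 0) = c / 2 := by
  have hcong : ∀ u ∈ Set.uIcc (0:ℝ) (δ/2),
      (if 2 * min u (δ - u) ≤ c then (1:ℝ) else 0)
        = Set.indicator (Set.Iic (c/2)) (fun _ => (1:ℝ)) u := by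
    intro u hu
    rw [Set.uIcc_of_le (by linarith)] at hu
    obtain ⟨hu1, hu2⟩ := hu
    have hmin : min u (δ - u) = u := min_eq_left (by linarith)
    rw [hmin]
    rcases le_or_gt u (c/2) with h | h
    · rw [if_pos (by linarith), Set.indicator_of_mem (Set.mem_Iic.2 h)]
    · rw [if_neg (by intro hx; linarith),
        Set.indicator_of_notMem (by simp only [Set.mem_Iic, not_le]; linarith)]
  rw [intervalIntegral.integral_congr hcong,
    intervalIntegral.integral_of_le (by linarith),
    MeasureTheory.setIntegral_indicator measurableSet_Iic]
  have hset : Set.Ioc (0:ℝ) (δ/2) ∩ Set.Iic (c/2) = Set.Ioc 0 (c/2) := by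
    ext x
    simp only [Set.mem_inter_iff, Set.mem_Ioc, Set.mem_Iic]
    constructor
    · rintro ⟨⟨h1, _⟩, h3⟩; exact ⟨h1, h3⟩
    · rintro ⟨h1, h2⟩; exact ⟨⟨h1, by linarith⟩, h2⟩
  rw [hset]
  simp only [MeasureTheory.setIntegral_const, smul_eq_mul, mul_one, Real.volume_Ioc]
  rw [measureReal_def, Real.volume_Ioc, ENNReal.toReal_ofReal (by linarith)]
  ring

lemma integral_abs_cos_two_pi : ∫ θ in (0:ℝ)..(2 * π), |Real.cos θ| = 4 := by
  have hπ := Real.pi_pos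
  have hint : ∀ a b : ℝ, IntervalIntegrable (fun θ => |Real.cos θ|) volume a b :=
    fun a b => (continuous_abs.comp Real.continuous_cos).intervalIntegrable a b
  have i1 : ∫ θ in (0:ℝ)..(π/2), |Real.cos θ| = 1 := by
    rw [intervalIntegral.integral_congr (g := Real.cos) ?_]
    · rw [integral_cos]; simp
    · intro θ hθ
      rw [Set.uIcc_of_le (by linarith)] at hθ
      exact abs_of_nonneg (Real.cos_nonneg_of_mem_Icc ⟨by linarith [hθ.1], hθ.2⟩)
  have i2 : ∫ θ in (π/2:ℝ)..(π + π/2), |Real.cos θ| = 2 := by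
    rw [intervalIntegral.integral_congr (g := fun θ => -Real.cos θ) ?_]
    · rw [intervalIntegral.integral_neg, integral_cos]
      rw [Real.sin_pi_div_two, Real.sin_add]
      simp
      norm_num
    · intro θ hθ
      rw [Set.uIcc_of_le (by linarith)] at hθ
      exact abs_of_nonpos
        (Real.cos_nonpos_of_pi_div_two_le_of_le hθ.1 (by linarith [hθ.2]))
  have i3 : ∫ θ in (π + π/2:ℝ)..(2 * π), |Real.cos θ| = 1 := by
    rw [intervalIntegral.integral_congr (g := Real.cos) ?_]
    · rw [integral_cos, Real.sin_two_pi, Real.sin_add, Real.sin_pi_div_two]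
      simp
    · intro θ hθ
      rw [Set.uIcc_of_le (by linarith)] at hθ
      show |Real.cos θ| = Real.cos θ
      rw [← Real.cos_sub_two_pi θ]
      have hmem : θ - 2 * π ∈ Set.Icc (-(π/2)) (π/2) :=
        ⟨by linarith [hθ.1], by linarith [hθ.2]⟩
      exact abs_of_nonneg (Real.cos_nonneg_of_mem_Icc hmem)
  have h12 := intervalIntegral.integral_add_adjacent_intervals
    (hint 0 (π/2)) (hint (π/2) (π + π/2))
  have h123 := intervalIntegral.integral_add_adjacent_intervals
    (hint 0 (π + π/2)) (hint (π + π/2) (2 * π))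
  rw [← h123, ← h12, i1, i2, i3]; norm_num

/-- Buffon's needle, short needle case: the probability that the needle crosses a line
equals `2L/(πδ)` when `L < δ`. -/
theorem buffon_short_needle (L δ : ℝ) (hL : 0 < L) (hδ : 0 < δ) (hLδ : L < δ) :
    (1 / (π * δ)) *
      ∫ θ in (0:ℝ)..(2 * π),
        ∫ u in (0:ℝ)..(δ / 2),
          (if 2 * min u (δ - u) ≤ L * |Real.cos θ| then (1:ℝ) else 0)
    = 2 * L / (π * δ) := by
  have hπ := Real.pi_pos
  have hcong : ∀ θ ∈ Set.uIcc (0:ℝ) (2 * π),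
      (∫ u in (0:ℝ)..(δ / 2),
        (if 2 * min u (δ - u) ≤ L * |Real.cos θ| then (1:ℝ) else 0))
        = (L / 2) * |Real.cos θ| := by
    intro θ _
    have h1 : 0 ≤ L * |Real.cos θ| := mul_nonneg hL.le (abs_nonneg _)
    have h2 : L * |Real.cos θ| ≤ δ := by
      have := Real.abs_cos_le_one θ
      nlinarith
    rw [buffon_inner δ (L * |Real.cos θ|) hδ h1 h2]; ring
  rw [intervalIntegral.integral_congr hcong, intervalIntegral.integral_const_mul,
    integral_abs_cos_two_pi]
  field_simp
  ring
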